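/- Let u be a continuously differentiable real-valued function on [a,b], with interface values u(a) = g⁻ and a right trace value g⁺ at a. If v > 0, then the single-cell upwind contribution −∫_a^b v u(x) u'(x) dx − v g⁻ (g⁺ − g⁻), when summed over a periodic partition of cells, equals Σ_interfaces (|v|/2)(jump of u)². -/

import Mathlib

lemma int_uu' (v : ℝ) (u : ℝ → ℝ) (hu : ContDiff ℝ 1 u) (a b : ℝ) :
    (∫ x in a..b, v * u x * deriv u x) = v / 2 * (u b) ^ 2 - v / 2 * (u a) ^ 2 := by
  have hd : ∀ x, HasDerivAt (fun y => v / 2 * u y ^ 2) (v * u x * deriv u x) x := by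
    intro x
    have h : HasDerivAt (fun y => v / 2 * u y ^ 2) (v / 2 * (((2 : ℕ) : ℝ) * u x ^ 1 * deriv u x)) x :=
      ((hu.differentiable one_ne_zero x).hasDerivAt.pow 2).const_mul (v / 2)
    convert h using 1
    ring
  have hc : Continuous (fun x => v * u x * deriv u x) := by
    exact (continuous_const.mul (hu.continuous)).mul (hu.continuous_deriv le_rfl)
  rw [intervalIntegral.integral_eq_sub_of_hasDerivAt (fun x _ => hd x)
    (hc.intervalIntegrable a b)]

theorem stmt13 {N : ℕ} [NeZero N] (v : ℝ) (hv : 0 < v)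
    (a b : ZMod N → ℝ) (hab : ∀ i, a i < b i)
    (u : ZMod N → ℝ → ℝ) (hu : ∀ i, ContDiff ℝ 1 (u i)) :
    -∑ i : ZMod N, ((∫ x in a i..b i, v * u i x * deriv (u i) x) +
        v * u (i - 1) (b (i - 1)) * (u i (a i) - u (i - 1) (b (i - 1)))) =
      ∑ i : ZMod N, |v| / 2 * (u i (a i) - u (i - 1) (b (i - 1))) ^ 2 := by
  have habs : |v| = v := abs_of_pos hv
  simp only [int_uu' v _ (hu _)]
  have hshift : ∑ i : ZMod N, v / 2 * (u i (b i)) ^ 2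
      = ∑ i : ZMod N, v / 2 * (u (i - 1) (b (i - 1))) ^ 2 :=
    (Fintype.sum_equiv (Equiv.subRight (1 : ZMod N)) _ _ (fun i => rfl)).symm
  rw [neg_eq_iff_add_eq_zero, ← Finset.sum_add_distrib]
  have : ∀ i : ZMod N,
      (v / 2 * (u i (b i)) ^ 2 - v / 2 * (u i (a i)) ^ 2 +
        v * u (i - 1) (b (i - 1)) * (u i (a i) - u (i - 1) (b (i - 1))) +
        |v| / 2 * (u i (a i) - u (i - 1) (b (i - 1))) ^ 2)
      = v / 2 * (u i (b i)) ^ 2 - v / 2 * (u (i - 1) (b (i - 1))) ^ 2 := by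
    intro i; rw [habs]; ring
  rw [Finset.sum_congr rfl (fun i _ => this i), Finset.sum_sub_distrib, hshift, sub_self]
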